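/- arXiv:2409.03732 — 2 statements merged into one kernel-verified Lean document; each statement's English description precedes it below -/
import Mathlib

section
/- For partitions X and Y of Ω, μ(ΔX ∩ ΔY) ≥ 0; i.e., the total measure of atoms crossed by both variables is nonnegative, even though individual atoms may have negative measure. -/
open Finset BigOperators

variable {Ω : Type*} [Fintype Ω] [DecidableEq Ω]

/-- Probability of a subset: `p(T) = Σ_{ω∈T} p(ω)`. -/
def pS (p : Ω → ℝ) (T : Finset Ω) : ℝ := ∑ ω ∈ T, p ω

/-- `p(T) log p(T)` (with `0 log 0 = 0` since `Real.log 0 = 0`). -/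
noncomputable def plog (p : Ω → ℝ) (T : Finset Ω) : ℝ := pS p T * Real.log (pS p T)

/-- The interior-loss measure of an atom `S`. -/
noncomputable def mu (p : Ω → ℝ) (S : Finset Ω) : ℝ :=
  ∑ T ∈ S.powerset.filter (· ≠ ∅), (-1 : ℝ) ^ (S.card - T.card) * plog p T

/-- `μ` of a set of atoms, extended additively. -/
noncomputable def muSet (p : Ω → ℝ) (R : Finset (Finset Ω)) : ℝ := ∑ S ∈ R, mu p S

/-- A partition `X` crosses an atom `S` when `S` meets at least two distinct parts. -/
def crossed (X : Finpartition (univ : Finset Ω)) (S : Finset Ω) : Prop :=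
  ∃ P ∈ X.parts, ∃ Q ∈ X.parts, P ≠ Q ∧ (S ∩ P).Nonempty ∧ (S ∩ Q).Nonempty

open scoped Classical in
/-- The content `ΔX`: set of atoms crossed by the partition `X`. -/
noncomputable def content (X : Finpartition (univ : Finset Ω)) : Finset (Finset Ω) :=
  (univ : Finset (Finset Ω)).filter (fun S => 2 ≤ S.card ∧ crossed X S)

/-- Shannon entropy of a partition. -/
noncomputable def Hent (p : Ω → ℝ) (X : Finpartition (univ : Finset Ω)) : ℝ :=
  - ∑ P ∈ X.parts, pS p P * Real.log (pS p P)

/-- `X` refines `Z`: every part of `X` lies in a part of `Z`. -/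
def refines (X Z : Finpartition (univ : Finset Ω)) : Prop :=
  ∀ P ∈ X.parts, ∃ Q ∈ Z.parts, P ⊆ Q


open scoped Classical
set_option linter.unusedSectionVars false

lemma plog_empty (p : Ω → ℝ) : plog p (∅ : Finset Ω) = 0 := by
  simp [plog, pS]

lemma mu_empty (p : Ω → ℝ) : mu p (∅ : Finset Ω) = 0 := by
  simp [mu, Finset.filter_singleton]

lemma mu_singleton (p : Ω → ℝ) (ω : Ω) : mu p {ω} = plog p {ω} := by
  have : ({ω} : Finset Ω).powerset.filter (· ≠ ∅) = {({ω} : Finset Ω)} := by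
    ext T
    simp only [mem_filter, mem_powerset, Finset.subset_singleton_iff, mem_singleton]
    constructor
    · rintro ⟨h1 | h1, h2⟩ <;> simp_all
    · rintro rfl; simp
  simp [mu, this]

lemma neg_one_pow_sum (x : Finset Ω) :
    (∑ m ∈ x.powerset, (-1 : ℝ) ^ m.card) = if x = ∅ then 1 else 0 := by
  have h := Finset.sum_powerset_neg_one_pow_card (x := x)
  have h2 := congrArg (fun z : ℤ => (z : ℝ)) h
  push_cast at h2
  simpa using h2

lemma innerSum (U T : Finset Ω) (hTU : T ⊆ U) :
    ∑ S ∈ U.powerset.filter (fun S => T ⊆ S), (-1:ℝ)^(S.card - T.card)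
      = if T = U then 1 else 0 := by
  have hbij : ∑ S ∈ U.powerset.filter (fun S => T ⊆ S), (-1:ℝ)^(S.card - T.card)
      = ∑ W ∈ (U \ T).powerset, (-1:ℝ)^W.card := by
    refine Finset.sum_nbij' (fun S => S \ T) (fun W => W ∪ T) ?_ ?_ ?_ ?_ ?_
    · intro S hS
      simp only [mem_filter, mem_powerset] at hS
      exact mem_powerset.2 (sdiff_subset_sdiff hS.1 (Finset.Subset.refl _))
    · intro W hW
      simp only [mem_powerset] at hW
      refine mem_filter.2 ⟨mem_powerset.2 ?_, subset_union_right⟩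
      exact union_subset (hW.trans (sdiff_subset)) hTU
    · intro S hS
      simp only [mem_filter, mem_powerset] at hS
      exact sdiff_union_of_subset hS.2
    · intro W hW
      simp only [mem_powerset] at hW
      have : Disjoint W T := disjoint_of_subset_left hW sdiff_disjoint
      exact union_sdiff_cancel_right this
    · intro S hS
      simp only [mem_filter, mem_powerset] at hS
      congr 1
      rw [card_sdiff_of_subset hS.2]
  rw [hbij, neg_one_pow_sum]
  congr 1
  simp only [eq_iff_iff]
  constructor
  · intro h; exact (sdiff_eq_empty_iff_subset.1 h).antisymm hTU |>.symm ▸ rfl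
  · intro h; subst h; exact sdiff_eq_empty_iff_subset.2 hTU

lemma sum_mu_powerset (p : Ω → ℝ) (U : Finset Ω) :
    ∑ S ∈ U.powerset, mu p S = plog p U := by
  have hmu : ∀ S ∈ U.powerset, mu p S =
      ∑ T ∈ U.powerset, (if T ⊆ S ∧ T ≠ ∅ then (-1:ℝ)^(S.card - T.card) * plog p T else 0) := by
    intro S hS
    rw [mu, ← Finset.sum_filter]
    congr 1
    ext T
    simp only [mem_filter, mem_powerset] at *
    constructor
    · rintro ⟨h1, h2⟩; exact ⟨h1.trans hS, h1, h2⟩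
    · rintro ⟨_, h1, h2⟩; exact ⟨h1, h2⟩
  rw [Finset.sum_congr rfl hmu, Finset.sum_comm]
  have hinner : ∀ T ∈ U.powerset,
      ∑ S ∈ U.powerset, (if T ⊆ S ∧ T ≠ ∅ then (-1:ℝ)^(S.card - T.card) * plog p T else 0)
        = if T = U ∧ T ≠ ∅ then plog p T else 0 := by
    intro T hT
    by_cases hTe : T = ∅
    · simp [hTe]
    · have : ∑ S ∈ U.powerset, (if T ⊆ S ∧ T ≠ ∅ then (-1:ℝ)^(S.card - T.card) * plog p T else 0)
          = (∑ S ∈ U.powerset.filter (fun S => T ⊆ S), (-1:ℝ)^(S.card - T.card)) * plog p T := by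
        rw [Finset.sum_mul, Finset.sum_filter]
        exact Finset.sum_congr rfl fun S _ => by simp [hTe]
      rw [this, innerSum U T (mem_powerset.1 hT)]
      by_cases hTU : T = U
      · subst hTU; simp [hTe]
      · simp [hTU, hTe]
  rw [Finset.sum_congr rfl hinner]
  by_cases hU : U = ∅
  · simp [hU, plog_empty]
  · have hcongr : ∀ x ∈ U.powerset,
        (if x = U ∧ x ≠ ∅ then plog p x else 0) = if x = U then plog p x else 0 := by
      intro x hx
      by_cases h : x = U
      · subst h; simp [hU]
      · simp [h]
    rw [Finset.sum_congr rfl hcongr, Finset.sum_ite_eq' U.powerset U (plog p)]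
    simp

lemma sum_mu_powerset_two (p : Ω → ℝ) (U : Finset Ω) :
    ∑ S ∈ U.powerset.filter (fun S => 2 ≤ S.card), mu p S
      = plog p U - ∑ ω ∈ U, plog p {ω} := by
  have hsplit := Finset.sum_filter_add_sum_filter_not U.powerset
    (fun S => 2 ≤ S.card) (mu p)
  have hsmall : ∑ S ∈ U.powerset.filter (fun S => ¬ 2 ≤ S.card), mu p S
      = ∑ ω ∈ U, plog p {ω} := by
    have himg : ∑ ω ∈ U, plog p {ω} = ∑ S ∈ U.image (fun ω => ({ω} : Finset Ω)), mu p S := by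
      rw [Finset.sum_image (by intro a _ b _ h; simpa using h)]
      exact Finset.sum_congr rfl fun ω _ => (mu_singleton p ω).symm
    rw [himg]
    refine (Finset.sum_subset ?_ ?_).symm
    · intro S hS
      simp only [mem_image] at hS
      obtain ⟨ω, hω, rfl⟩ := hS
      simp only [mem_filter, mem_powerset]
      refine ⟨Finset.singleton_subset_iff.2 hω, by simp⟩
    · intro S hS hS2
      simp only [mem_filter, mem_powerset, not_le] at hS
      simp only [mem_image, not_exists] at hS2
      rcases (by omega : #S = 0 ∨ #S = 1) with h | h
      · rw [Finset.card_eq_zero.1 h, mu_empty]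
      · obtain ⟨ω, rfl⟩ := Finset.card_eq_one.1 h
        exact absurd (mu_singleton p ω) (by exact fun _ => hS2 ω ⟨hS.1 (by simp), rfl⟩)
  linarith [sum_mu_powerset p U, hsplit, hsmall]

lemma key_lemma (p : Ω → ℝ) (parts : Finset (Finset Ω))
    (hdisj : ∀ P ∈ parts, ∀ Q ∈ parts, P ≠ Q → Disjoint P Q)
    (hcover : ∀ ω : Ω, ∃ P ∈ parts, ω ∈ P) :
    ∑ S ∈ (univ : Finset (Finset Ω)).filter
        (fun S => 2 ≤ S.card ∧ ¬ ∃ P ∈ parts, S ⊆ P), mu p S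
      = plog p (univ : Finset Ω) - ∑ P ∈ parts, plog p P := by
  -- total sum over all atoms of card ≥ 2
  have htot : ∑ S ∈ (univ : Finset (Finset Ω)).filter (fun S => 2 ≤ S.card), mu p S
      = plog p (univ : Finset Ω) - ∑ ω : Ω, plog p {ω} := by
    have := sum_mu_powerset_two p (univ : Finset Ω)
    rwa [Finset.powerset_univ] at this
  -- the atoms of card ≥ 2 inside some part
  have hbiU : (univ : Finset (Finset Ω)).filter (fun S => 2 ≤ S.card ∧ ∃ P ∈ parts, S ⊆ P)
      = parts.biUnion (fun P => P.powerset.filter (fun S => 2 ≤ S.card)) := by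
    ext S
    simp only [mem_filter, mem_univ, true_and, mem_biUnion, mem_powerset]
    tauto
  have hpair : ∀ P ∈ parts, ∀ Q ∈ parts, P ≠ Q →
      Disjoint (P.powerset.filter (fun S => 2 ≤ S.card))
        (Q.powerset.filter (fun S => 2 ≤ S.card)) := by
    intro P hP Q hQ hPQ
    rw [Finset.disjoint_left]
    intro S hSP hSQ
    simp only [mem_filter, mem_powerset] at hSP hSQ
    have hne : S.Nonempty := Finset.card_pos.1 (by omega)
    obtain ⟨ω, hω⟩ := hne
    exact Finset.disjoint_left.1 (hdisj P hP Q hQ hPQ) (hSP.1 hω) (hSQ.1 hω)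
  have hin : ∑ S ∈ (univ : Finset (Finset Ω)).filter
        (fun S => 2 ≤ S.card ∧ ∃ P ∈ parts, S ⊆ P), mu p S
      = ∑ P ∈ parts, (plog p P - ∑ ω ∈ P, plog p {ω}) := by
    rw [hbiU, Finset.sum_biUnion hpair]
    exact Finset.sum_congr rfl fun P _ => sum_mu_powerset_two p P
  -- singletons split along the partition
  have hsingle : ∑ ω : Ω, plog p {ω} = ∑ P ∈ parts, ∑ ω ∈ P, plog p {ω} := by
    rw [← Finset.sum_biUnion (fun P hP Q hQ h => hdisj P hP Q hQ h)]
    refine (Finset.sum_congr ?_ fun _ _ => rfl).symm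
    ext ω
    simp only [mem_biUnion, mem_univ, iff_true]
    exact hcover ω
  -- split the total sum
  have hsplit : ∑ S ∈ (univ : Finset (Finset Ω)).filter (fun S => 2 ≤ S.card), mu p S
      = ∑ S ∈ (univ : Finset (Finset Ω)).filter
          (fun S => 2 ≤ S.card ∧ ∃ P ∈ parts, S ⊆ P), mu p S
        + ∑ S ∈ (univ : Finset (Finset Ω)).filter
          (fun S => 2 ≤ S.card ∧ ¬ ∃ P ∈ parts, S ⊆ P), mu p S := by
    rw [← Finset.sum_filter_add_sum_filter_not
      ((univ : Finset (Finset Ω)).filter (fun S => 2 ≤ S.card))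
      (fun S => ∃ P ∈ parts, S ⊆ P) (mu p), Finset.filter_filter, Finset.filter_filter]
  rw [Finset.sum_sub_distrib] at hin
  linarith [htot, hin, hsingle, hsplit]

lemma crossed_iff (X : Finpartition (univ : Finset Ω)) (S : Finset Ω) (hS : S.Nonempty) :
    crossed X S ↔ ¬ ∃ P ∈ X.parts, S ⊆ P := by
  constructor
  · rintro ⟨P, hP, Q, hQ, hPQ, ⟨a, ha⟩, ⟨b, hb⟩⟩ ⟨R, hR, hSR⟩
    simp only [mem_inter] at ha hb
    have h1 : P = R := X.eq_of_mem_parts hP hR ha.2 (hSR ha.1)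
    have h2 : Q = R := X.eq_of_mem_parts hQ hR hb.2 (hSR hb.1)
    exact hPQ (h1.trans h2.symm)
  · intro h
    by_contra hc
    obtain ⟨ω, hω⟩ := hS
    obtain ⟨P, hP, hωP⟩ := X.exists_mem (mem_univ ω)
    refine h ⟨P, hP, fun σ hσ => ?_⟩
    obtain ⟨Q, hQ, hσQ⟩ := X.exists_mem (mem_univ σ)
    by_cases hPQ : Q = P
    · exact hPQ ▸ hσQ
    · exact absurd ⟨P, hP, Q, hQ, (Ne.symm hPQ), ⟨ω, mem_inter.2 ⟨hω, hωP⟩⟩,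
        ⟨σ, mem_inter.2 ⟨hσ, hσQ⟩⟩⟩ hc

lemma content_eq (X : Finpartition (univ : Finset Ω)) :
    content X = (univ : Finset (Finset Ω)).filter
      (fun S => 2 ≤ S.card ∧ ¬ ∃ P ∈ X.parts, S ⊆ P) := by
  ext S
  simp only [content, mem_filter, mem_univ, true_and]
  constructor
  · rintro ⟨h1, h2⟩
    exact ⟨h1, (crossed_iff X S (Finset.card_pos.1 (by omega))).1 h2⟩
  · rintro ⟨h1, h2⟩
    exact ⟨h1, (crossed_iff X S (Finset.card_pos.1 (by omega))).2 h2⟩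

section Z
variable (X Y : Finpartition (univ : Finset Ω))

noncomputable def Zparts : Finset (Finset Ω) :=
  ((X.parts ×ˢ Y.parts).image (fun PQ => PQ.1 ∩ PQ.2)).filter (·.Nonempty)

lemma Zparts_disj : ∀ P ∈ Zparts X Y, ∀ Q ∈ Zparts X Y, P ≠ Q → Disjoint P Q := by
  intro R hR R' hR' hne
  simp only [Zparts, mem_filter, mem_image, mem_product] at hR hR'
  obtain ⟨⟨⟨P, Q⟩, ⟨hP, hQ⟩, rfl⟩, hne1⟩ := hR
  obtain ⟨⟨⟨P', Q'⟩, ⟨hP', hQ'⟩, rfl⟩, hne2⟩ := hR'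
  rw [Finset.disjoint_left]
  intro ω h1 h2
  simp only [mem_inter] at h1 h2
  exact hne (by rw [X.eq_of_mem_parts hP hP' h1.1 h2.1, Y.eq_of_mem_parts hQ hQ' h1.2 h2.2])

lemma Zparts_cover : ∀ ω : Ω, ∃ R ∈ Zparts X Y, ω ∈ R := by
  intro ω
  obtain ⟨P, hP, hωP⟩ := X.exists_mem (mem_univ ω)
  obtain ⟨Q, hQ, hωQ⟩ := Y.exists_mem (mem_univ ω)
  refine ⟨P ∩ Q, ?_, mem_inter.2 ⟨hωP, hωQ⟩⟩
  simp only [Zparts, mem_filter, mem_image, mem_product]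
  exact ⟨⟨(P, Q), ⟨hP, hQ⟩, rfl⟩, ⟨ω, mem_inter.2 ⟨hωP, hωQ⟩⟩⟩

lemma content_union_eq :
    content X ∪ content Y = (univ : Finset (Finset Ω)).filter
      (fun S => 2 ≤ S.card ∧ ¬ ∃ R ∈ Zparts X Y, S ⊆ R) := by
  ext S
  simp only [mem_union, content, mem_filter, mem_univ, true_and]
  constructor
  · rintro (⟨h1, h2⟩ | ⟨h1, h2⟩) <;> refine ⟨h1, ?_⟩ <;>
      rintro ⟨R, hR, hSR⟩ <;>
      [skip; skip] <;> {
        simp only [Zparts, mem_filter, mem_image, mem_product] at hR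
        obtain ⟨⟨⟨P, Q⟩, ⟨hP, hQ⟩, rfl⟩, _⟩ := hR
        first
        | exact (crossed_iff X S (Finset.card_pos.1 (by omega))).1 h2
            ⟨P, hP, hSR.trans inter_subset_left⟩
        | exact (crossed_iff Y S (Finset.card_pos.1 (by omega))).1 h2
            ⟨Q, hQ, hSR.trans inter_subset_right⟩ }
  · rintro ⟨h1, h2⟩
    have hSne : S.Nonempty := Finset.card_pos.1 (by omega)
    by_contra hc
    push_neg at hc
    have hX : ¬ crossed X S := hc.1 h1
    have hY : ¬ crossed Y S := hc.2 h1
    rw [crossed_iff X S hSne, not_not] at hX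
    rw [crossed_iff Y S hSne, not_not] at hY
    obtain ⟨P, hP, hSP⟩ := hX
    obtain ⟨Q, hQ, hSQ⟩ := hY
    refine h2 ⟨P ∩ Q, ?_, subset_inter hSP hSQ⟩
    simp only [Zparts, mem_filter, mem_image, mem_product]
    obtain ⟨ω, hω⟩ := hSne
    exact ⟨⟨(P, Q), ⟨hP, hQ⟩, rfl⟩, ⟨ω, mem_inter.2 ⟨hSP hω, hSQ hω⟩⟩⟩

end Z

lemma term_ineq (a b c : ℝ) (ha : 0 ≤ a) (hab : a ≤ b) (hac : a ≤ c) :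
    a - b * c ≤ a * Real.log a - a * Real.log b - a * Real.log c := by
  rcases eq_or_lt_of_le ha with rfl | h
  · simp only [zero_sub, Real.log_zero, zero_mul, mul_zero, sub_zero, neg_nonpos]
    nlinarith [hab, hac]
  · have hb : 0 < b := lt_of_lt_of_le h hab
    have hc : 0 < c := lt_of_lt_of_le h hac
    have hx : 0 < b * c / a := by positivity
    have hlog := Real.log_le_sub_one_of_pos hx
    rw [Real.log_div (by positivity) (ne_of_gt h), Real.log_mul (ne_of_gt hb) (ne_of_gt hc)]
      at hlog
    have := mul_le_mul_of_nonneg_left hlog (le_of_lt h)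
    have ha' : a * (b * c / a - 1) = b * c - a := by
      field_simp
    nlinarith [this, ha']

lemma pS_decomp (p : Ω → ℝ) (Y : Finpartition (univ : Finset Ω)) (P : Finset Ω) :
    pS p P = ∑ Q ∈ Y.parts, pS p (P ∩ Q) := by
  have hP : P = Y.parts.biUnion (fun Q => P ∩ Q) := by
    ext ω
    simp only [mem_biUnion, mem_inter]
    constructor
    · intro hω
      obtain ⟨Q, hQ, hωQ⟩ := Y.exists_mem (mem_univ ω)
      exact ⟨Q, hQ, hω, hωQ⟩
    · rintro ⟨Q, _, hω, _⟩; exact hω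
  rw [pS]
  conv_lhs => rw [hP]
  rw [Finset.sum_biUnion]
  · rfl
  · intro Q hQ Q' hQ' hne
    exact disjoint_of_subset_left inter_subset_right
      (disjoint_of_subset_right inter_subset_right (Y.disjoint hQ hQ' hne))

lemma sum_pS_parts (p : Ω → ℝ) (X : Finpartition (univ : Finset Ω)) :
    ∑ P ∈ X.parts, pS p P = ∑ ω : Ω, p ω := by
  have h0 : ∑ ω : Ω, p ω = ∑ ω ∈ X.parts.biUnion id, p ω := by rw [X.biUnion_parts]
  rw [h0, Finset.sum_biUnion]
  · rfl
  · intro P hP Q hQ hne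
    exact X.disjoint hP hQ hne

lemma sum_plog_Zparts (p : Ω → ℝ) (X Y : Finpartition (univ : Finset Ω)) :
    ∑ R ∈ Zparts X Y, plog p R
      = ∑ PQ ∈ X.parts ×ˢ Y.parts, plog p (PQ.1 ∩ PQ.2) := by
  have himg : Zparts X Y = ((X.parts ×ˢ Y.parts).filter
      (fun PQ => (PQ.1 ∩ PQ.2).Nonempty)).image (fun PQ => PQ.1 ∩ PQ.2) := by
    rw [Zparts, Finset.filter_image]
  rw [himg, Finset.sum_image, ← Finset.sum_filter_add_sum_filter_not (X.parts ×ˢ Y.parts)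
      (fun PQ => (PQ.1 ∩ PQ.2).Nonempty)]
  · have : ∑ PQ ∈ (X.parts ×ˢ Y.parts).filter
        (fun PQ => ¬ (PQ.1 ∩ PQ.2).Nonempty), plog p (PQ.1 ∩ PQ.2) = 0 := by
      refine Finset.sum_eq_zero fun PQ hPQ => ?_
      simp only [mem_filter, Finset.not_nonempty_iff_eq_empty] at hPQ
      rw [hPQ.2, plog_empty]
    rw [this, add_zero]
  · rintro ⟨P, Q⟩ hPQ ⟨P', Q'⟩ hPQ' heq
    simp only [mem_coe, mem_filter, mem_product] at hPQ hPQ'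
    obtain ⟨⟨hP, hQ⟩, ⟨ω, hω⟩⟩ := hPQ
    obtain ⟨⟨hP', hQ'⟩, _⟩ := hPQ'
    simp only [mem_inter] at hω
    have hω' : ω ∈ P' ∩ Q' := by
      have h : P ∩ Q = P' ∩ Q' := heq
      exact h ▸ mem_inter.2 hω
    simp only [mem_inter] at hω'
    exact Prod.ext (X.eq_of_mem_parts hP hP' hω.1 hω'.1)
      (Y.eq_of_mem_parts hQ hQ' hω.2 hω'.2)

theorem muSet_inter_nonneg {Ω : Type*} [Fintype Ω] [DecidableEq Ω] (p : Ω → ℝ)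
    (hp : ∀ ω, 0 ≤ p ω) (hsum : ∑ ω, p ω = 1)
    (X Y : Finpartition (univ : Finset Ω)) :
    0 ≤ muSet p (content X ∩ content Y) := by
  have hpuniv : plog p (univ : Finset Ω) = 0 := by
    have : pS p (univ : Finset Ω) = 1 := hsum
    simp [plog, this]
  have hdX : ∀ P ∈ X.parts, ∀ Q ∈ X.parts, P ≠ Q → Disjoint P Q :=
    fun P hP Q hQ h => X.disjoint hP hQ h
  have hdY : ∀ P ∈ Y.parts, ∀ Q ∈ Y.parts, P ≠ Q → Disjoint P Q :=
    fun P hP Q hQ h => Y.disjoint hP hQ h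
  have hcX : ∀ ω : Ω, ∃ P ∈ X.parts, ω ∈ P := fun ω => X.exists_mem (mem_univ ω)
  have hcY : ∀ ω : Ω, ∃ P ∈ Y.parts, ω ∈ P := fun ω => Y.exists_mem (mem_univ ω)
  have hXv : muSet p (content X) = plog p univ - ∑ P ∈ X.parts, plog p P := by
    rw [muSet, content_eq]; exact key_lemma p X.parts hdX hcX
  have hYv : muSet p (content Y) = plog p univ - ∑ Q ∈ Y.parts, plog p Q := by
    rw [muSet, content_eq]; exact key_lemma p Y.parts hdY hcY
  have hUv : muSet p (content X ∪ content Y)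
      = plog p univ - ∑ R ∈ Zparts X Y, plog p R := by
    rw [muSet, content_union_eq]
    exact key_lemma p (Zparts X Y) (Zparts_disj X Y) (Zparts_cover X Y)
  have hIE : muSet p (content X ∪ content Y) + muSet p (content X ∩ content Y)
      = muSet p (content X) + muSet p (content Y) := Finset.sum_union_inter
  -- rewrite the three sums over the product
  have hA : ∑ P ∈ X.parts, plog p P
      = ∑ PQ ∈ X.parts ×ˢ Y.parts, pS p (PQ.1 ∩ PQ.2) * Real.log (pS p PQ.1) := by
    rw [Finset.sum_product]
    refine Finset.sum_congr rfl fun P _ => ?_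
    rw [plog, show pS p P * Real.log (pS p P)
        = (∑ Q ∈ Y.parts, pS p (P ∩ Q)) * Real.log (pS p P) from by
      rw [← pS_decomp p Y P], Finset.sum_mul]
  have hB : ∑ Q ∈ Y.parts, plog p Q
      = ∑ PQ ∈ X.parts ×ˢ Y.parts, pS p (PQ.1 ∩ PQ.2) * Real.log (pS p PQ.2) := by
    rw [Finset.sum_product_right]
    refine Finset.sum_congr rfl fun Q _ => ?_
    rw [plog, show pS p Q * Real.log (pS p Q)
        = (∑ P ∈ X.parts, pS p (P ∩ Q)) * Real.log (pS p Q) from by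
      have h : ∀ P, pS p (P ∩ Q) = pS p (Q ∩ P) := fun P => by rw [inter_comm]
      simp_rw [h]
      rw [← pS_decomp p X Q], Finset.sum_mul]
  have hC := sum_plog_Zparts p X Y
  -- key numeric inequality
  have hsum1 : ∑ PQ ∈ X.parts ×ˢ Y.parts, pS p (PQ.1 ∩ PQ.2) = 1 := by
    rw [Finset.sum_product]
    rw [Finset.sum_congr rfl fun P _ => (pS_decomp p Y P).symm, sum_pS_parts p X, hsum]
  have hsum2 : ∑ PQ ∈ X.parts ×ˢ Y.parts, pS p PQ.1 * pS p PQ.2 = 1 := by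
    rw [Finset.sum_product]
    have : ∀ P ∈ X.parts, ∑ Q ∈ Y.parts, pS p P * pS p Q = pS p P * 1 := by
      intro P _
      rw [← Finset.mul_sum, sum_pS_parts p Y, hsum]
    rw [Finset.sum_congr rfl this]
    simp only [mul_one]
    rw [sum_pS_parts p X, hsum]
  have hterm : ∀ PQ ∈ X.parts ×ˢ Y.parts,
      pS p (PQ.1 ∩ PQ.2) - pS p PQ.1 * pS p PQ.2
        ≤ plog p (PQ.1 ∩ PQ.2) - pS p (PQ.1 ∩ PQ.2) * Real.log (pS p PQ.1)
          - pS p (PQ.1 ∩ PQ.2) * Real.log (pS p PQ.2) := by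
    rintro ⟨P, Q⟩ _
    refine term_ineq _ _ _ ?_ ?_ ?_
    · exact Finset.sum_nonneg fun ω _ => hp ω
    · exact Finset.sum_le_sum_of_subset_of_nonneg inter_subset_left fun ω _ _ => hp ω
    · exact Finset.sum_le_sum_of_subset_of_nonneg inter_subset_right fun ω _ _ => hp ω
  have hineq := Finset.sum_le_sum hterm
  rw [Finset.sum_sub_distrib, Finset.sum_sub_distrib, Finset.sum_sub_distrib, hsum1, hsum2]
    at hineq
  -- combine
  linarith [hXv, hYv, hUv, hIE, hA, hB, hC, hineq, hpuniv]
end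

section
/- For partitions X₁, …, Xₙ of Ω, the dual total correlation DTC := H(X₁∨⋯∨Xₙ) − Σᵢ H(Xᵢ | ∨_{j≠i} Xⱼ) equals μ(∪_{i<j} (ΔXᵢ ∩ ΔXⱼ)), the measure of the set of atoms crossed by at least two of the variables. -/
open Finset BigOperators

variable {Ω : Type*} [Fintype Ω] [DecidableEq Ω]

/-! ### Auxiliary lemmas -/

lemma sum_pow_neg_one_real {α : Type*} [DecidableEq α] (x : Finset α) :
    ∑ m ∈ x.powerset, (-1 : ℝ) ^ m.card = if x = ∅ then 1 else 0 := by
  have h := Finset.sum_powerset_neg_one_pow_card (x := x)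
  calc ∑ m ∈ x.powerset, (-1 : ℝ) ^ m.card
      = ((∑ m ∈ x.powerset, (-1 : ℤ) ^ m.card : ℤ) : ℝ) := by push_cast; rfl
    _ = _ := by rw [h]; split <;> norm_num

lemma sum_sandwich {α : Type*} [DecidableEq α] {T P : Finset α} (hTP : T ⊆ P) :
    ∑ S ∈ P.powerset.filter (fun S => T ⊆ S), (-1 : ℝ) ^ (S.card - T.card)
      = if T = P then 1 else 0 := by
  have key : ∑ S ∈ P.powerset.filter (fun S => T ⊆ S), (-1 : ℝ) ^ (S.card - T.card)
      = ∑ m ∈ (P \ T).powerset, (-1 : ℝ) ^ m.card := by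
    refine Finset.sum_bij' (fun S _ => S \ T) (fun m _ => m ∪ T) ?_ ?_ ?_ ?_ ?_
    · intro S hS
      simp only [mem_filter, mem_powerset] at hS
      exact mem_powerset.mpr (sdiff_subset_sdiff hS.1 le_rfl)
    · intro m hm
      simp only [mem_powerset] at hm
      refine mem_filter.mpr ⟨mem_powerset.mpr (union_subset (hm.trans sdiff_subset) hTP),
        subset_union_right⟩
    · intro S hS
      simp only [mem_filter, mem_powerset] at hS
      exact sdiff_union_of_subset hS.2
    · intro m hm
      simp only [mem_powerset] at hm
      have hd : Disjoint m T := disjoint_of_subset_left hm sdiff_disjoint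
      show (m ∪ T) \ T = m
      rw [union_sdiff_right, sdiff_eq_self_of_disjoint hd]
    · intro S hS
      simp only [mem_filter, mem_powerset] at hS
      rw [card_sdiff_of_subset hS.2]
  rw [key, sum_pow_neg_one_real]
  congr 1
  simp only [eq_iff_iff, sdiff_eq_empty_iff_subset]
  exact ⟨fun h => hTP.antisymm h, fun h => h ▸ subset_refl P⟩

lemma plog_eq_sum_mu (p : Ω → ℝ) (P : Finset Ω) :
    plog p P = ∑ S ∈ P.powerset.filter (· ≠ ∅), mu p S := by
  by_cases hP : P = ∅
  · subst hP
    simp [plog, pS, Finset.powerset_empty, Finset.filter_singleton]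
  have step1 : ∀ S ∈ P.powerset.filter (· ≠ ∅),
      mu p S = ∑ T ∈ P.powerset.filter (· ≠ ∅),
        (if T ⊆ S then (-1 : ℝ) ^ (S.card - T.card) * plog p T else 0) := by
    intro S hS
    simp only [mem_filter, mem_powerset] at hS
    unfold mu
    rw [Finset.sum_filter, Finset.sum_filter]
    rw [show S.powerset = P.powerset.filter (· ⊆ S) from by
      ext T; simp only [mem_powerset, mem_filter]
      exact ⟨fun h => ⟨h.trans hS.1, h⟩, fun h => h.2⟩]
    rw [Finset.sum_filter]
    apply Finset.sum_congr rfl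
    intro T _
    by_cases h1 : T = ∅ <;> by_cases h2 : T ⊆ S <;> simp [h1, h2]
  rw [Finset.sum_congr rfl step1, Finset.sum_comm]
  have step2 : ∀ T ∈ P.powerset.filter (· ≠ ∅),
      (∑ S ∈ P.powerset.filter (· ≠ ∅),
        if T ⊆ S then (-1 : ℝ) ^ (S.card - T.card) * plog p T else 0)
      = (if T = P then 1 else 0) * plog p T := by
    intro T hT
    simp only [mem_filter, mem_powerset] at hT
    have hzero : ∀ S ∈ P.powerset,
        (if T ⊆ S then (-1 : ℝ) ^ (S.card - T.card) * plog p T else 0) ≠ 0 → S ≠ ∅ := by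
      intro S _ h he
      subst he
      rw [if_neg (fun hc => hT.2 (subset_empty.mp hc))] at h
      exact h rfl
    rw [Finset.sum_filter_of_ne hzero, ← Finset.sum_filter, ← Finset.sum_mul, sum_sandwich hT.1]
  rw [Finset.sum_congr rfl step2]
  simp only [ite_mul, one_mul, zero_mul]
  rw [Finset.sum_ite_eq' (P.powerset.filter (· ≠ ∅)) P (plog p)]
  simp [hP]

lemma sum_mu_univ (p : Ω → ℝ) (hsum : ∑ ω, p ω = 1) :
    ∑ S ∈ (univ : Finset (Finset Ω)).filter (· ≠ ∅), mu p S = 0 := by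
  have h := plog_eq_sum_mu p (univ : Finset Ω)
  rw [Finset.powerset_univ] at h
  rw [← h]
  have h1 : pS p (univ : Finset Ω) = 1 := hsum
  simp [plog, h1]

lemma crossed_card {Y : Finpartition (univ : Finset Ω)} {S : Finset Ω}
    (h : crossed Y S) : 2 ≤ S.card := by
  obtain ⟨P, hP, Q, hQ, hne, ⟨x, hx⟩, ⟨y, hy⟩⟩ := h
  rw [mem_inter] at hx hy
  refine Finset.one_lt_card.mpr ⟨x, hx.1, y, hy.1, fun hxy => ?_⟩
  subst hxy
  exact (Finset.disjoint_left.mp (Y.disjoint hP hQ hne)) hx.2 hy.2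

lemma not_crossed_iff {Y : Finpartition (univ : Finset Ω)} {S : Finset Ω} (hS : S.Nonempty) :
    ¬ crossed Y S ↔ ∃ P ∈ Y.parts, S ⊆ P := by
  constructor
  · intro h
    obtain ⟨ω, hω⟩ := hS
    obtain ⟨P, hP, hωP⟩ := Y.exists_mem (mem_univ ω)
    refine ⟨P, hP, fun x hx => ?_⟩
    obtain ⟨Q, hQ, hxQ⟩ := Y.exists_mem (mem_univ x)
    have hPQ : P = Q := by
      by_contra hne
      exact h ⟨P, hP, Q, hQ, hne, ⟨ω, mem_inter.mpr ⟨hω, hωP⟩⟩, ⟨x, mem_inter.mpr ⟨hx, hxQ⟩⟩⟩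
    exact hPQ ▸ hxQ
  · rintro ⟨P, hP, hSP⟩ ⟨P1, h1, P2, h2, hne, ⟨x, hx⟩, ⟨y, hy⟩⟩
    rw [mem_inter] at hx hy
    have e1 : P1 = P := Y.eq_of_mem_parts h1 hP hx.2 (hSP hx.1)
    have e2 : P2 = P := Y.eq_of_mem_parts h2 hP hy.2 (hSP hy.1)
    exact hne (e1.trans e2.symm)

lemma mem_content_iff {Y : Finpartition (univ : Finset Ω)} {S : Finset Ω} :
    S ∈ content Y ↔ crossed Y S := by
  classical
  simp only [content, Finset.mem_filter, mem_univ, true_and]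
  exact ⟨fun h => h.2, fun h => ⟨crossed_card h, h⟩⟩

lemma Hent_eq_muSet (p : Ω → ℝ) (hsum : ∑ ω, p ω = 1) (Y : Finpartition (univ : Finset Ω)) :
    Hent p Y = muSet p (content Y) := by
  classical
  set D : Finset (Finset Ω) := Y.parts.biUnion (fun P => P.powerset.filter (· ≠ ∅)) with hD
  have hdisj : (↑Y.parts : Set (Finset Ω)).PairwiseDisjoint
      (fun P => P.powerset.filter (· ≠ ∅)) := by
    intro P hP Q hQ hne
    simp only [Function.onFun, Finset.disjoint_left, mem_filter, mem_powerset]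
    rintro S ⟨hSP, hSne⟩ ⟨hSQ, -⟩
    obtain ⟨x, hx⟩ := nonempty_iff_ne_empty.mpr hSne
    exact (Finset.disjoint_left.mp (Y.disjoint hP hQ hne)) (hSP hx) (hSQ hx)
  have hsumD : ∑ S ∈ D, mu p S = - Hent p Y := by
    rw [hD, Finset.sum_biUnion hdisj]
    unfold Hent
    rw [neg_neg]
    exact Finset.sum_congr rfl fun P _ => (plog_eq_sum_mu p P).symm
  have hunion : D ∪ content Y = (univ : Finset (Finset Ω)).filter (· ≠ ∅) := by
    ext S
    simp only [hD, mem_union, mem_biUnion, mem_filter, mem_powerset, mem_univ, true_and,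
      mem_content_iff]
    constructor
    · rintro (⟨P, hP, hSP, hSne⟩ | hcr)
      · exact hSne
      · have h2 := crossed_card hcr
        intro he; subst he; simp at h2
    · intro hSne
      by_cases hcr : crossed Y S
      · exact Or.inr hcr
      · obtain ⟨P, hP, hSP⟩ := (not_crossed_iff (nonempty_iff_ne_empty.mpr hSne)).mp hcr
        exact Or.inl ⟨P, hP, hSP, hSne⟩
  have hdisj2 : Disjoint D (content Y) := by
    simp only [Finset.disjoint_left, hD, mem_biUnion, mem_filter, mem_powerset, mem_content_iff]
    rintro S ⟨P, hP, hSP, hSne⟩ hcr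
    exact (not_crossed_iff (nonempty_iff_ne_empty.mpr hSne)).mpr ⟨P, hP, hSP⟩ hcr
  have htot := sum_mu_univ p hsum
  rw [← hunion, Finset.sum_union hdisj2, hsumD] at htot
  have hfin : muSet p (content Y) = Hent p Y := by
    unfold muSet; linarith
  exact hfin.symm

lemma exists_part_mono {Y Z : Finpartition (univ : Finset Ω)} (h : Y ≤ Z) {S : Finset Ω} :
    (∃ P ∈ Y.parts, S ⊆ P) → ∃ Q ∈ Z.parts, S ⊆ Q := by
  rintro ⟨P, hP, hSP⟩
  obtain ⟨Q, hQ, hPQ⟩ := h hP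
  exact ⟨Q, hQ, hSP.trans hPQ⟩

lemma subset_part_inf {Y Z : Finpartition (univ : Finset Ω)} {S : Finset Ω} (hS : S.Nonempty)
    (hY : ∃ P ∈ Y.parts, S ⊆ P) (hZ : ∃ Q ∈ Z.parts, S ⊆ Q) :
    ∃ P ∈ (Y ⊓ Z).parts, S ⊆ P := by
  obtain ⟨P, hP, h1⟩ := hY
  obtain ⟨Q, hQ, h2⟩ := hZ
  refine ⟨P ∩ Q, ?_, subset_inter h1 h2⟩
  rw [Finpartition.parts_inf]
  refine Finset.mem_erase.mpr ⟨?_, Finset.mem_image.mpr ⟨(P, Q), mem_product.mpr ⟨hP, hQ⟩, rfl⟩⟩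
  obtain ⟨x, hx⟩ := hS
  intro hbot
  have hmem : x ∈ P ∩ Q := subset_inter h1 h2 hx
  rw [bot_eq_empty] at hbot
  rw [hbot] at hmem
  exact notMem_empty x hmem

lemma subset_part_inf' {ι : Type*} [DecidableEq ι] {s : Finset ι} (hs : s.Nonempty)
    (X : ι → Finpartition (univ : Finset Ω)) {S : Finset Ω} (hS : S.Nonempty) :
    (∃ P ∈ (s.inf' hs X).parts, S ⊆ P) ↔ ∀ j ∈ s, ∃ Q ∈ (X j).parts, S ⊆ Q := by
  induction hs using Finset.Nonempty.cons_induction with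
  | singleton a => simp [Finset.inf'_singleton]
  | cons a s ha hs ih =>
    rw [Finset.inf'_cons hs]
    constructor
    · intro h j hj
      rcases Finset.mem_cons.mp hj with rfl | hjs
      · exact exists_part_mono inf_le_left h
      · exact (ih.mp (exists_part_mono inf_le_right h)) j hjs
    · intro h
      refine subset_part_inf hS (h a (Finset.mem_cons_self a s)) (ih.mpr fun j hj => ?_)
      exact h j (Finset.mem_cons.mpr (Or.inr hj))

lemma content_inf' {ι : Type*} [DecidableEq ι] {s : Finset ι} (hs : s.Nonempty)
    (X : ι → Finpartition (univ : Finset Ω)) :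
    content (s.inf' hs X) = s.biUnion (fun j => content (X j)) := by
  ext S
  simp only [mem_content_iff, mem_biUnion]
  constructor
  · intro hcr
    have hS : S.Nonempty := Finset.card_pos.mp (by have := crossed_card hcr; omega)
    by_contra hc
    push_neg at hc
    have hall : ∀ j ∈ s, ∃ Q ∈ (X j).parts, S ⊆ Q :=
      fun j hj => (not_crossed_iff hS).mp (hc j hj)
    exact (not_crossed_iff hS).mpr ((subset_part_inf' hs X hS).mpr hall) hcr
  · rintro ⟨j, hj, hcr⟩
    have hS : S.Nonempty := Finset.card_pos.mp (by have := crossed_card hcr; omega)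
    by_contra hc
    have hall := (subset_part_inf' hs X hS).mp ((not_crossed_iff hS).mp hc)
    exact (not_crossed_iff hS).mpr (hall j hj) hcr

lemma counting {ι : Type*} [Fintype ι] [DecidableEq ι] [LinearOrder ι]
    (A : ι → Finset (Finset Ω)) (S : Finset Ω) (c : ℝ) :
    (if S ∈ (univ : Finset ι).biUnion A then c else 0)
      - ∑ i, ((if S ∈ (univ : Finset ι).biUnion A then c else 0)
          - (if S ∈ ((univ : Finset ι).erase i).biUnion A then c else 0))
      = if S ∈ ((univ : Finset (ι × ι)).filter fun q => q.1 < q.2).biUnion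
          (fun q => A q.1 ∩ A q.2) then c else 0 := by
  classical
  set t : Finset ι := univ.filter (fun i => S ∈ A i) with ht
  have hU : S ∈ (univ : Finset ι).biUnion A ↔ t.Nonempty := by
    simp [ht, mem_biUnion, Finset.filter_nonempty_iff]
  have hV : ∀ i, S ∈ ((univ : Finset ι).erase i).biUnion A ↔ (t.erase i).Nonempty := by
    intro i
    rw [mem_biUnion]
    constructor
    · rintro ⟨j, hj, hS⟩
      exact ⟨j, mem_erase.mpr ⟨(mem_erase.mp hj).1, by simp [ht, hS]⟩⟩
    · rintro ⟨j, hj⟩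
      rw [mem_erase, ht, mem_filter] at hj
      exact ⟨j, mem_erase.mpr ⟨hj.1, mem_univ j⟩, hj.2.2⟩
  have hW : S ∈ ((univ : Finset (ι × ι)).filter fun q => q.1 < q.2).biUnion
      (fun q => A q.1 ∩ A q.2) ↔ 1 < t.card := by
    simp only [mem_biUnion, mem_filter, mem_univ, true_and, mem_inter]
    constructor
    · rintro ⟨q, hlt, h1, h2⟩
      rw [Finset.one_lt_card]
      exact ⟨q.1, by simp [ht, h1], q.2, by simp [ht, h2], ne_of_lt hlt⟩
    · intro h
      obtain ⟨a, haa, b, hbb, hab⟩ := Finset.one_lt_card.mp h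
      simp only [ht, mem_filter] at haa hbb
      rcases lt_or_gt_of_ne hab with hlt | hgt
      · exact ⟨(a, b), hlt, haa.2, hbb.2⟩
      · exact ⟨(b, a), hgt, hbb.2, haa.2⟩
  rcases Finset.eq_empty_or_nonempty t with h0 | hne
  · simp [hU, hV, hW, h0]
  by_cases h1 : t.card = 1
  · obtain ⟨i₀, hi₀⟩ := Finset.card_eq_one.mp h1
    have hVe : ∀ i, (t.erase i).Nonempty ↔ i ≠ i₀ := by
      intro i
      rw [hi₀]
      constructor
      · rintro ⟨x, hx⟩
        rw [mem_erase, mem_singleton] at hx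
        rintro rfl
        exact hx.1 hx.2
      · intro hne
        exact ⟨i₀, mem_erase.mpr ⟨Ne.symm hne, mem_singleton_self i₀⟩⟩
    have hsum1 : ∑ i, ((if S ∈ (univ : Finset ι).biUnion A then c else 0)
        - (if S ∈ ((univ : Finset ι).erase i).biUnion A then c else 0)) = c := by
      rw [Finset.sum_eq_single i₀
        (fun j _ hj => by simp [hU, hne, hV, hVe, hj])
        (fun h => absurd (mem_univ i₀) h)]
      simp [hU, hne, hV, hVe]
    rw [hsum1]
    simp [hU, hne, hW, h1]
  · have h2 : 1 < t.card := by
      have hp := Finset.card_pos.mpr hne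
      omega
    have hVa : ∀ i, (t.erase i).Nonempty := by
      intro i
      rw [← Finset.card_pos]
      have hc := Finset.pred_card_le_card_erase (s := t) (a := i)
      omega
    simp [hU, hne, hV, hVa, hW, h2]

theorem dualTotalCorrelation_eq {Ω : Type*} [Fintype Ω] [DecidableEq Ω] (p : Ω → ℝ)
    (hp : ∀ ω, 0 ≤ p ω) (hsum : ∑ ω, p ω = 1)
    {n : ℕ} (hn : 2 ≤ n) (X : Fin n → Finpartition (univ : Finset Ω)) :
    Hent p ((univ : Finset (Fin n)).inf'
        (univ_nonempty_iff.mpr (Fin.pos_iff_nonempty.mp (by omega))) X)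
      - ∑ i, (Hent p ((univ : Finset (Fin n)).inf'
            (univ_nonempty_iff.mpr (Fin.pos_iff_nonempty.mp (by omega))) X)
          - Hent p (((univ : Finset (Fin n)).erase i).inf'
              (Finset.card_pos.mp (by
                rw [Finset.card_erase_of_mem (mem_univ i), Finset.card_univ,
                  Fintype.card_fin]
                omega)) X))
      = muSet p (((univ : Finset (Fin n × Fin n)).filter fun q => q.1 < q.2).biUnion
          fun q => content (X q.1) ∩ content (X q.2)) := by
  classical
  have hH : ∀ (s : Finset (Fin n)) (hs : s.Nonempty),
      Hent p (s.inf' hs X) = muSet p (s.biUnion fun j => content (X j)) := by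
    intro s hs
    rw [Hent_eq_muSet p hsum, content_inf']
  simp only [hH]
  have key : ∀ R : Finset (Finset Ω),
      muSet p R = ∑ S ∈ (univ : Finset (Finset Ω)), (if S ∈ R then mu p S else 0) := by
    intro R
    rw [Finset.sum_ite_mem, univ_inter]
    rfl
  simp only [key]
  simp only [← Finset.sum_sub_distrib]
  rw [Finset.sum_comm, ← Finset.sum_sub_distrib]
  exact Finset.sum_congr rfl fun S _ => counting (fun i => content (X i)) S (mu p S)
end
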